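/- arXiv:1208.5280 — 2 statements merged into one kernel-verified Lean document; each statement's English description precedes it below -/
import Mathlib

section
/- Let N = 2^n and I ⊆ {1,...,N}. Then ∑_{r=1}^{N} C(w_r, I) = |I|², where C(w_r, I) = ∫_0^1 w_r(x) |∑_{k∈I} w_k(x)|² dx. -/
open MeasureTheory Finset

/-- Rademacher functions `r_k(t) = sign (sin (2π 2^k t))` with `sign 0 := -1`. -/
noncomputable def rademacher (k : ℕ) (t : ℝ) : ℝ :=
  if 0 < Real.sin (2 * Real.pi * 2 ^ k * t) then 1 else -1

/-- Walsh functions (original Walsh ordering, indexed from `1`):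
`w_1 = 1` and `w_{2^k+m} = r_k · w_m` for `1 ≤ m ≤ 2^k`; equivalently `w_n` is the
product of the Rademacher functions selected by the binary digits of `n - 1`. -/
noncomputable def walsh (n : ℕ) (t : ℝ) : ℝ :=
  ∏ k ∈ Finset.range n, if (n - 1).testBit k then rademacher k t else 1

lemma rademacher_cases (k : ℕ) (t : ℝ) : rademacher k t = 1 ∨ rademacher k t = -1 := by
  unfold rademacher; split <;> simp

lemma measurable_rademacher (k : ℕ) : Measurable (rademacher k) := by
  unfold rademacher
  exact Measurable.ite (measurableSet_lt measurable_const (by fun_prop))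
    measurable_const measurable_const

lemma measurable_walsh (n : ℕ) : Measurable (walsh n) := by
  unfold walsh
  apply Finset.measurable_prod
  intro k _
  by_cases h : (n - 1).testBit k <;> simp [h, measurable_rademacher]

lemma abs_walsh_le (r : ℕ) (x : ℝ) : |walsh r x| ≤ 1 := by
  unfold walsh
  rw [Finset.abs_prod]
  calc ∏ k ∈ Finset.range r, |if (r - 1).testBit k then rademacher k x else 1|
      ≤ ∏ k ∈ Finset.range r, 1 := by
        apply Finset.prod_le_prod (fun k _ => abs_nonneg _)
        intro k _
        split
        · rcases rademacher_cases k x with h | h <;> simp [h]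
        · simp
    _ = 1 := by simp

lemma walsh_eq_prod_range {n r : ℕ} (hr : r ≤ 2 ^ n) (x : ℝ) :
    walsh r x = ∏ k ∈ Finset.range n, if (r - 1).testBit k then rademacher k x else 1 := by
  unfold walsh
  rcases le_total r n with h | h
  · apply Finset.prod_subset (Finset.range_subset_range.mpr h)
    intro k _ hk
    simp only [Finset.mem_range, not_lt] at hk
    have hlt : r - 1 < 2 ^ k :=
      lt_of_lt_of_le (lt_of_le_of_lt (Nat.sub_le r 1) (Nat.lt_two_pow_self))
        (Nat.pow_le_pow_right (by norm_num) hk)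
    simp [Nat.testBit_eq_false_of_lt hlt]
  · symm
    apply Finset.prod_subset (Finset.range_subset_range.mpr h)
    intro k _ hk
    simp only [Finset.mem_range, not_lt] at hk
    have hlt : r - 1 < 2 ^ k := by
      have hp : 0 < 2 ^ n := Nat.two_pow_pos n
      have h1 : r - 1 < 2 ^ n := by omega
      exact lt_of_lt_of_le h1 (Nat.pow_le_pow_right (by norm_num) hk)
    simp [Nat.testBit_eq_false_of_lt hlt]

lemma sum_walsh_aux (n : ℕ) (x : ℝ) :
    ∑ m ∈ Finset.range (2 ^ n),
        ∏ k ∈ Finset.range n, (if m.testBit k then rademacher k x else 1)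
      = ∏ k ∈ Finset.range n, (1 + rademacher k x) := by
  induction n with
  | zero => simp
  | succ n ih =>
    rw [pow_succ, mul_two, Finset.sum_range_add]
    have h1 : ∀ m ∈ Finset.range (2 ^ n),
        ∏ k ∈ Finset.range (n + 1), (if m.testBit k then rademacher k x else 1)
          = ∏ k ∈ Finset.range n, (if m.testBit k then rademacher k x else 1) := by
      intro m hm
      rw [Finset.prod_range_succ, Nat.testBit_eq_false_of_lt (Finset.mem_range.mp hm), if_neg]
      · ring
      · simp
    have h2 : ∀ m ∈ Finset.range (2 ^ n),
        ∏ k ∈ Finset.range (n + 1), (if (2 ^ n + m).testBit k then rademacher k x else 1)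
          = (∏ k ∈ Finset.range n, (if m.testBit k then rademacher k x else 1))
              * rademacher n x := by
      intro m hm
      rw [Finset.prod_range_succ, Nat.testBit_two_pow_add_eq,
        Nat.testBit_eq_false_of_lt (Finset.mem_range.mp hm)]
      simp only [Bool.not_false, if_pos]
      congr 1
      apply Finset.prod_congr rfl
      intro k hk
      rw [Nat.testBit_two_pow_add_gt (Finset.mem_range.mp hk)]
    rw [Finset.sum_congr rfl h1, Finset.sum_congr rfl h2, ← Finset.sum_mul, ih,
      Finset.prod_range_succ]
    ring

lemma sum_walsh (n : ℕ) (x : ℝ) :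
    ∑ r ∈ Finset.Icc 1 (2 ^ n), walsh r x = ∏ k ∈ Finset.range n, (1 + rademacher k x) := by
  have : Finset.Icc 1 (2 ^ n) = Finset.Ico 1 (2 ^ n + 1) := by
    rw [Finset.Ico_add_one_right_eq_Icc]
  rw [this, Finset.sum_Ico_eq_sum_range]
  simp only [Nat.add_sub_cancel]
  rw [← sum_walsh_aux n x]
  apply Finset.sum_congr rfl
  intro m hm
  have hm' : m < 2 ^ n := Finset.mem_range.mp hm
  rw [walsh_eq_prod_range (by omega : 1 + m ≤ 2 ^ n) x]
  simp

lemma rademacher_eq_one {n k : ℕ} {x : ℝ} (hk : k < n) (hx : 0 < x)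
    (hx' : x < ((2 : ℝ) ^ n)⁻¹) : rademacher k x = 1 := by
  unfold rademacher
  rw [if_pos]
  apply Real.sin_pos_of_pos_of_lt_pi
  · positivity
  · have hkn : (2 : ℝ) ^ k * 2 ≤ 2 ^ n := by
      rw [← pow_succ]
      exact pow_le_pow_right₀ (by norm_num) (by omega)
    have h2 : (2 : ℝ) ^ k * x < 1 / 2 := by
      have h3 : (2 : ℝ) ^ k * x < (2 : ℝ) ^ k * ((2 : ℝ) ^ n)⁻¹ := by
        apply mul_lt_mul_of_pos_left hx' (by positivity)
      apply lt_of_lt_of_le h3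
      rw [mul_inv_le_iff₀ (by positivity : (0:ℝ) < 2 ^ n)]
      linarith
    have hpi : 0 < Real.pi := Real.pi_pos
    calc 2 * Real.pi * 2 ^ k * x = 2 * Real.pi * (2 ^ k * x) := by ring
      _ < 2 * Real.pi * (1 / 2) := by
          apply mul_lt_mul_of_pos_left h2 (by positivity)
      _ = Real.pi := by ring

lemma exists_rademacher_neg {n : ℕ} {x : ℝ} (hx : ((2 : ℝ) ^ n)⁻¹ ≤ x) (hx1 : x < 1) :
    ∃ k < n, rademacher k x = -1 := by
  have hn : 0 < n := by
    by_contra h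
    push_neg at h
    interval_cases n
    simp at hx
    linarith
  have hhalf : (1 : ℝ) / 2 ≤ 2 ^ (n - 1) * x := by
    have h2 : (2 : ℝ) ^ (n - 1) * ((2 : ℝ) ^ n)⁻¹ = 1 / 2 := by
      have hn' : (2 : ℝ) ^ n = 2 ^ (n - 1) * 2 := by
        rw [← pow_succ]; congr 1; omega
      rw [hn']
      have : ((2:ℝ) ^ (n-1)) ≠ 0 := by positivity
      field_simp
    calc (1 : ℝ) / 2 = 2 ^ (n - 1) * ((2 : ℝ) ^ n)⁻¹ := h2.symm
      _ ≤ 2 ^ (n - 1) * x := mul_le_mul_of_nonneg_left hx (by positivity)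
  classical
  have hex : ∃ k, (1 : ℝ) / 2 ≤ 2 ^ k * x := ⟨n - 1, hhalf⟩
  let k := Nat.find hex
  have hk : (1 : ℝ) / 2 ≤ 2 ^ k * x := Nat.find_spec hex
  have hklt : ∀ j < k, ¬ ((1 : ℝ) / 2 ≤ 2 ^ j * x) := fun j hj => Nat.find_min hex hj
  have hkn : k < n := by
    have : k ≤ n - 1 := Nat.find_le hhalf
    omega
  have hub : (2 : ℝ) ^ k * x < 1 := by
    rcases Nat.eq_zero_or_pos k with h0 | h0
    · simpa [h0] using hx1
    · have := hklt (k - 1) (by omega)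
      push_neg at this
      have h2 : (2 : ℝ) ^ k = 2 * 2 ^ (k - 1) := by
        rw [← pow_succ']; congr 1; omega
      rw [h2, mul_assoc]
      linarith
  refine ⟨k, hkn, ?_⟩
  unfold rademacher
  rw [if_neg]
  push_neg
  have hpi : 0 < Real.pi := Real.pi_pos
  have key : Real.sin (2 * Real.pi * 2 ^ k * x) =
      Real.sin (2 * Real.pi * 2 ^ k * x - 2 * Real.pi) := by
    rw [Real.sin_sub_two_pi]
  rw [key]
  apply Real.sin_nonpos_of_nonpos_of_neg_pi_le
  · nlinarith
  · nlinarith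

/-- For `N = 2^n` and `I ⊆ {1,…,N}`, the correlations sum to `|I|²`:
`∑_{r=1}^{N} C(w_r, I) = |I|²`. -/
theorem stmt12 (n : ℕ) (I : Finset ℕ) (hI : I ⊆ Finset.Icc 1 (2 ^ n)) :
    ∑ r ∈ Finset.Icc 1 (2 ^ n),
        ∫ x in Set.Icc (0:ℝ) 1, walsh r x * (∑ k ∈ I, walsh k x) ^ 2
      = (I.card : ℝ) ^ 2 := by
  classical
  set S : ℝ → ℝ := fun x => ∑ k ∈ I, walsh k x with hS
  have hSmeas : Measurable S := by
    apply Finset.measurable_sum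
    intro k _
    exact measurable_walsh k
  have hSbound : ∀ x, |S x| ≤ (I.card : ℝ) := by
    intro x
    calc |S x| ≤ ∑ k ∈ I, |walsh k x| := Finset.abs_sum_le_sum_abs _ _
      _ ≤ ∑ k ∈ I, 1 := Finset.sum_le_sum (fun k _ => abs_walsh_le k x)
      _ = I.card := by simp
  have hinteg : ∀ r ∈ Finset.Icc 1 (2 ^ n),
      Integrable (fun x => walsh r x * S x ^ 2) (volume.restrict (Set.Icc (0:ℝ) 1)) := by
    intro r _
    apply Integrable.mono' (g := fun _ => (I.card : ℝ) ^ 2)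
      (integrable_const _)
      (((measurable_walsh r).mul (hSmeas.pow_const 2)).aestronglyMeasurable)
    filter_upwards with x
    have h1 := abs_walsh_le r x
    have h2 := hSbound x
    have h3 : |S x| ^ 2 ≤ (I.card : ℝ) ^ 2 := by
      apply pow_le_pow_left₀ (abs_nonneg _) h2 2
    calc ‖walsh r x * S x ^ 2‖ = |walsh r x| * |S x| ^ 2 := by
          rw [Real.norm_eq_abs, abs_mul, abs_pow]
      _ ≤ 1 * (I.card : ℝ) ^ 2 := by
          apply mul_le_mul h1 h3 (by positivity) (by norm_num)
      _ = (I.card : ℝ) ^ 2 := by ring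
  rw [← MeasureTheory.integral_finset_sum _ hinteg]
  have hc1 : ((2 : ℝ) ^ n)⁻¹ ≤ 1 := by
    rw [inv_le_one_iff₀]
    right
    exact one_le_pow₀ (by norm_num)
  have heqset : ∫ x in Set.Icc (0:ℝ) 1, ∑ r ∈ Finset.Icc 1 (2 ^ n), walsh r x * S x ^ 2
      = ∫ x in Set.Ioo (0:ℝ) 1, ∑ r ∈ Finset.Icc 1 (2 ^ n), walsh r x * S x ^ 2 :=
    (MeasureTheory.setIntegral_congr_set MeasureTheory.Ioo_ae_eq_Icc).symm
  rw [heqset]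
  have heqfun : Set.EqOn (fun x => ∑ r ∈ Finset.Icc 1 (2 ^ n), walsh r x * S x ^ 2)
      ((Set.Ioo (0:ℝ) ((2 : ℝ) ^ n)⁻¹).indicator
        (fun _ => (2 : ℝ) ^ n * (I.card : ℝ) ^ 2)) (Set.Ioo 0 1) := by
    intro x hx
    obtain ⟨hx0, hx1⟩ := hx
    simp only
    rw [← Finset.sum_mul, sum_walsh]
    by_cases hcase : x < ((2 : ℝ) ^ n)⁻¹
    · rw [Set.indicator_of_mem (Set.mem_Ioo.mpr ⟨hx0, hcase⟩)]
      have hrad : ∀ k ∈ Finset.range n, (1 : ℝ) + rademacher k x = 2 := by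
        intro k hk
        rw [rademacher_eq_one (Finset.mem_range.mp hk) hx0 hcase]
        norm_num
      rw [Finset.prod_congr rfl hrad, Finset.prod_const]
      have hSval : S x = I.card := by
        simp only [hS]
        have : ∀ k ∈ I, walsh k x = 1 := by
          intro k hk
          have hk2 := hI hk
          rw [Finset.mem_Icc] at hk2
          rw [walsh_eq_prod_range hk2.2 x]
          apply Finset.prod_eq_one
          intro j hj
          split
          · exact rademacher_eq_one (Finset.mem_range.mp hj) hx0 hcase
          · rfl
        rw [Finset.sum_congr rfl this]
        simp
      rw [hSval]
      simp
    · push_neg at hcase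
      rw [Set.indicator_of_notMem (by simp [hcase])]
      obtain ⟨k, hkn, hkneg⟩ := exists_rademacher_neg hcase hx1
      rw [Finset.prod_eq_zero (Finset.mem_range.mpr hkn) (by rw [hkneg]; ring)]
      ring
  rw [MeasureTheory.setIntegral_congr_fun measurableSet_Ioo heqfun,
    MeasureTheory.integral_indicator measurableSet_Ioo,
    MeasureTheory.Measure.restrict_restrict measurableSet_Ioo]
  have hinter : Set.Ioo (0:ℝ) ((2 : ℝ) ^ n)⁻¹ ∩ Set.Ioo 0 1 = Set.Ioo 0 ((2 : ℝ) ^ n)⁻¹ := by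
    apply Set.inter_eq_left.mpr
    exact Set.Ioo_subset_Ioo le_rfl hc1
  rw [hinter, MeasureTheory.setIntegral_const, Real.volume_real_Ioo]
  rw [smul_eq_mul, sub_zero, max_eq_left (by positivity)]
  field_simp
end

section
/- Let B₁ be the L¹–L² Khintchine constant. In dimension 2^k, for every vector a ∈ ℂ^{2^k} supported on the set D = {1, 2, 4, ..., 2^{k-1}} of powers of two (indices of the Rademacher columns inside the Hadamard matrix), one has ‖a‖_{ℓ²_{2^k}} ≤ (B₁/√(2^k)) ‖H_{2^k} a‖_{ℓ¹_{2^k}}. -/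
/-- The normalized Hadamard matrices, defined inductively by `H_1 = [1]` and
`H_{2^{k+1}} = 2^{-1/2} [[H, H],[H, −H]]`. -/
noncomputable def hadamard : (k : ℕ) → Matrix (Fin (2 ^ k)) (Fin (2 ^ k)) ℝ
  | 0 => Matrix.of fun _ _ => 1
  | k + 1 =>
    Matrix.reindex (finSumFinEquiv.trans (finCongr (by rw [pow_succ]; ring)))
      (finSumFinEquiv.trans (finCongr (by rw [pow_succ]; ring)))
      ((Real.sqrt 2)⁻¹ •
        Matrix.fromBlocks (hadamard k) (hadamard k) (hadamard k) (-(hadamard k)))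

noncomputable def E (k : ℕ) : Fin (2 ^ k) ⊕ Fin (2 ^ k) ≃ Fin (2 ^ (k + 1)) :=
  finSumFinEquiv.trans (finCongr (by rw [pow_succ]; ring))

lemma had_succ (k : ℕ) (p q : Fin (2 ^ k) ⊕ Fin (2 ^ k)) :
    hadamard (k + 1) (E k p) (E k q) =
      (Real.sqrt 2)⁻¹ *
        Matrix.fromBlocks (hadamard k) (hadamard k) (hadamard k) (-(hadamard k)) p q := by
  show Matrix.reindex _ _ _ _ _ = _
  rw [Matrix.reindex_apply, Matrix.submatrix_apply]
  simp [E, Matrix.smul_apply, smul_eq_mul]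

lemma E_val (k : ℕ) (q : Fin (2^k) ⊕ Fin (2^k)) :
    ((E k q : Fin (2^(k+1))) : ℕ) = finSumFinEquiv q := by simp [E]

lemma had_col0 (k : ℕ) (i j : Fin (2 ^ k)) (hj : (j : ℕ) = 0) :
    hadamard k i j = ((Real.sqrt 2)⁻¹) ^ k := by
  induction k with
  | zero => simp [hadamard]
  | succ k ih =>
    obtain ⟨p, rfl⟩ := (E k).surjective i
    obtain ⟨q, rfl⟩ := (E k).surjective j
    rw [E_val] at hj
    have hq : q = Sum.inl ⟨0, by positivity⟩ := by
      rcases q with q | q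
      · simp only [finSumFinEquiv_apply_left, Fin.coe_castAdd] at hj
        congr 1
        exact Fin.ext hj
      · simp only [finSumFinEquiv_apply_right, Fin.coe_natAdd] at hj
        omega
    subst hq
    rw [had_succ]
    rcases p with p | p <;>
      simp [Matrix.fromBlocks, ih, pow_succ, mul_comm] <;>
      rw [ih p 0 (by simp)] <;> ring

noncomputable def Srow (k : ℕ) (a : Fin (2 ^ k) → ℂ) (i : Fin (2 ^ k)) : ℂ :=
  ∑ j, ((hadamard k i j : ℝ) : ℂ) * a j

lemma sum_equiv_E (k : ℕ) (f : Fin (2 ^ (k + 1)) → ℂ) :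
    ∑ j, f j = (∑ q : Fin (2 ^ k), f (E k (Sum.inl q))) + ∑ q : Fin (2 ^ k), f (E k (Sum.inr q)) := by
  rw [show (∑ j, f j) = ∑ q : Fin (2 ^ k) ⊕ Fin (2 ^ k), f (E k q) from
    (Fintype.sum_equiv (E k) _ f (fun q => rfl)).symm, Fintype.sum_sum_type]

lemma sum_equiv_E' (k : ℕ) (f : Fin (2 ^ (k + 1)) → ℝ) :
    ∑ j, f j = (∑ q : Fin (2 ^ k), f (E k (Sum.inl q))) + ∑ q : Fin (2 ^ k), f (E k (Sum.inr q)) := by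
  rw [show (∑ j, f j) = ∑ q : Fin (2 ^ k) ⊕ Fin (2 ^ k), f (E k q) from
    (Fintype.sum_equiv (E k) _ f (fun q => rfl)).symm, Fintype.sum_sum_type]

lemma supp_inl (k : ℕ) (a : Fin (2 ^ (k + 1)) → ℂ)
    (h : ∀ i : Fin (2 ^ (k + 1)), (¬ ∃ l < k + 1, (i : ℕ) = 2 ^ l) → a i = 0) :
    ∀ j : Fin (2 ^ k), (¬ ∃ l < k, (j : ℕ) = 2 ^ l) → a (E k (Sum.inl j)) = 0 := by
  intro j hj
  apply h
  rintro ⟨l, hl, hval⟩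
  rw [E_val] at hval
  simp only [finSumFinEquiv_apply_left, Fin.coe_castAdd] at hval
  apply hj
  refine ⟨l, ?_, hval⟩
  by_contra hlk
  have : k ≤ l := by omega
  have h1 : (2:ℕ) ^ k ≤ 2 ^ l := Nat.pow_le_pow_right (by norm_num) this
  have h2 : (j : ℕ) < 2 ^ k := j.isLt
  omega

lemma supp_inr (k : ℕ) (a : Fin (2 ^ (k + 1)) → ℂ)
    (h : ∀ i : Fin (2 ^ (k + 1)), (¬ ∃ l < k + 1, (i : ℕ) = 2 ^ l) → a i = 0) :
    ∀ j : Fin (2 ^ k), (j : ℕ) ≠ 0 → a (E k (Sum.inr j)) = 0 := by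
  intro j hj
  apply h
  rintro ⟨l, hl, hval⟩
  rw [E_val] at hval
  simp only [finSumFinEquiv_apply_right, Fin.coe_natAdd] at hval
  have h2 : (j : ℕ) < 2 ^ k := j.isLt
  have h1 : (2:ℕ) ^ l ≤ 2 ^ k := Nat.pow_le_pow_right (by norm_num) (by omega)
  omega

lemma Srow_succ (k : ℕ) (a : Fin (2 ^ (k + 1)) → ℂ)
    (h : ∀ i : Fin (2 ^ (k + 1)), (¬ ∃ l < k + 1, (i : ℕ) = 2 ^ l) → a i = 0) (i : Fin (2 ^ k)) :
    Srow (k + 1) a (E k (Sum.inl i)) =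
      (((Real.sqrt 2)⁻¹ : ℝ) : ℂ) * (Srow k (fun j => a (E k (Sum.inl j))) i +
        ((((Real.sqrt 2)⁻¹ ^ k : ℝ)) : ℂ) * a (E k (Sum.inr ⟨0, by positivity⟩))) ∧
    Srow (k + 1) a (E k (Sum.inr i)) =
      (((Real.sqrt 2)⁻¹ : ℝ) : ℂ) * (Srow k (fun j => a (E k (Sum.inl j))) i -
        ((((Real.sqrt 2)⁻¹ ^ k : ℝ)) : ℂ) * a (E k (Sum.inr ⟨0, by positivity⟩))) := by
  have key : ∀ j : Fin (2 ^ k),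
      ∑ q : Fin (2 ^ k), ((hadamard k j q : ℝ) : ℂ) * a (E k (Sum.inr q)) =
        ((((Real.sqrt 2)⁻¹ ^ k : ℝ)) : ℂ) * a (E k (Sum.inr ⟨0, by positivity⟩)) := by
    intro j
    rw [Finset.sum_eq_single_of_mem (⟨0, by positivity⟩ : Fin (2 ^ k)) (Finset.mem_univ _)]
    · rw [had_col0 k j _ rfl]
    · intro q _ hq
      rw [supp_inr k a h q (fun h0 => hq (Fin.ext h0)), mul_zero]
  constructor
  · unfold Srow
    rw [sum_equiv_E]
    simp only [had_succ, Matrix.fromBlocks_apply₁₁, Matrix.fromBlocks_apply₁₂]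
    push_cast
    simp only [mul_assoc, ← Finset.mul_sum]
    rw [key i]
    push_cast
    ring
  · unfold Srow
    rw [sum_equiv_E]
    simp only [had_succ, Matrix.fromBlocks_apply₂₁, Matrix.fromBlocks_apply₂₂, Matrix.neg_apply]
    push_cast
    simp only [mul_assoc, neg_mul, mul_neg, ← Finset.mul_sum, Finset.sum_neg_distrib]
    rw [key i]
    push_cast
    ring

lemma norm_sq_complex (z : ℂ) : ‖z‖ ^ 2 = z.re ^ 2 + z.im ^ 2 := by
  rw [Complex.sq_norm, Complex.normSq_apply]; ring

lemma four_ineq (x y : ℂ) : ‖x + y‖ ^ 4 + ‖x - y‖ ^ 4 ≤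
    2 * (‖x‖ ^ 2 + ‖y‖ ^ 2) ^ 2 + 8 * (‖x‖ ^ 2 * ‖y‖ ^ 2) := by
  have h4 : ∀ z : ℂ, ‖z‖ ^ 4 = (‖z‖ ^ 2) ^ 2 := by intro z; ring
  rw [h4, h4, norm_sq_complex (x + y), norm_sq_complex (x - y), norm_sq_complex x,
    norm_sq_complex y]
  simp only [Complex.add_re, Complex.add_im, Complex.sub_re, Complex.sub_im]
  nlinarith [sq_nonneg (x.re * y.im - x.im * y.re), sq_nonneg (x.re * y.re + x.im * y.im),
    sq_nonneg (x.re * y.im + x.im * y.re), sq_nonneg (x.re * y.re - x.im * y.im)]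

lemma par_law (x y : ℂ) : ‖x + y‖ ^ 2 + ‖x - y‖ ^ 2 = 2 * ‖x‖ ^ 2 + 2 * ‖y‖ ^ 2 := by
  rw [norm_sq_complex (x + y), norm_sq_complex (x - y), norm_sq_complex x, norm_sq_complex y]
  simp only [Complex.add_re, Complex.add_im, Complex.sub_re, Complex.sub_im]
  ring

lemma half_sq (z : ℂ) : ‖(((Real.sqrt 2)⁻¹ : ℝ) : ℂ) * z‖ ^ 2 = (1 / 2) * ‖z‖ ^ 2 := by
  rw [norm_mul, mul_pow, Complex.norm_real, Real.norm_eq_abs,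
    abs_of_nonneg (by positivity), inv_pow, Real.sq_sqrt (by norm_num : (0:ℝ) ≤ 2)]
  norm_num

lemma half_four (z : ℂ) : ‖(((Real.sqrt 2)⁻¹ : ℝ) : ℂ) * z‖ ^ 4 = (1 / 4) * ‖z‖ ^ 4 := by
  have : ‖(((Real.sqrt 2)⁻¹ : ℝ) : ℂ) * z‖ ^ 4 = (‖(((Real.sqrt 2)⁻¹ : ℝ) : ℂ) * z‖ ^ 2) ^ 2 := by
    ring
  rw [this, half_sq]; ring

lemma u_sq (k : ℕ) (c : ℂ) :
    ‖((((Real.sqrt 2)⁻¹ ^ k : ℝ)) : ℂ) * c‖ ^ 2 = (1 / 2 ^ k) * ‖c‖ ^ 2 := by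
  rw [norm_mul, mul_pow, Complex.norm_real, Real.norm_eq_abs, abs_of_nonneg (by positivity),
    ← pow_mul, mul_comm k 2, pow_mul, inv_pow, Real.sq_sqrt (by norm_num : (0:ℝ) ≤ 2)]
  rw [inv_pow, one_div]

lemma moments : ∀ (k : ℕ) (a : Fin (2 ^ k) → ℂ),
    (∀ i : Fin (2 ^ k), (¬ ∃ l < k, (i : ℕ) = 2 ^ l) → a i = 0) →
    (∑ i, ‖Srow k a i‖ ^ 2 = ∑ j, ‖a j‖ ^ 2) ∧
    (∑ i, ‖Srow k a i‖ ^ 4 ≤ 3 / 2 ^ k * (∑ i, ‖Srow k a i‖ ^ 2) ^ 2) := by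
  intro k
  induction k with
  | zero =>
    intro a h
    have ha : ∀ i, a i = 0 := by
      intro i
      apply h
      rintro ⟨l, hl, _⟩
      omega
    have hs : ∀ i, Srow 0 a i = 0 := by
      intro i
      unfold Srow
      simp [ha]
    simp [hs, ha]
  | succ k ih =>
    intro a h
    set b : Fin (2 ^ k) → ℂ := fun j => a (E k (Sum.inl j)) with hb
    set c : ℂ := a (E k (Sum.inr ⟨0, by positivity⟩)) with hc
    set u : ℂ := ((((Real.sqrt 2)⁻¹ ^ k : ℝ)) : ℂ) * c with hu
    obtain ⟨ih2, ih4⟩ := ih b (supp_inl k a h)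
    set s : Fin (2 ^ k) → ℂ := Srow k b with hs
    -- pointwise formulas
    have hl : ∀ i, Srow (k + 1) a (E k (Sum.inl i)) =
        (((Real.sqrt 2)⁻¹ : ℝ) : ℂ) * (s i + u) := fun i => (Srow_succ k a h i).1
    have hr : ∀ i, Srow (k + 1) a (E k (Sum.inr i)) =
        (((Real.sqrt 2)⁻¹ : ℝ) : ℂ) * (s i - u) := fun i => (Srow_succ k a h i).2
    have hU : ‖u‖ ^ 2 = (1 / 2 ^ k) * ‖c‖ ^ 2 := u_sq k c
    -- second moment
    have hm2 : ∑ i, ‖Srow (k + 1) a i‖ ^ 2 = (∑ i, ‖s i‖ ^ 2) + 2 ^ k * ‖u‖ ^ 2 := by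
      rw [sum_equiv_E' k (fun i => ‖Srow (k + 1) a i‖ ^ 2)]
      simp only [hl, hr, half_sq]
      rw [← Finset.sum_add_distrib]
      have : ∀ i : Fin (2 ^ k), 1 / 2 * ‖s i + u‖ ^ 2 + 1 / 2 * ‖s i - u‖ ^ 2 =
          ‖s i‖ ^ 2 + ‖u‖ ^ 2 := by
        intro i
        have := par_law (s i) u
        linarith
      rw [Finset.sum_congr rfl (fun i _ => this i), Finset.sum_add_distrib,
        Finset.sum_const, Finset.card_univ, Fintype.card_fin, nsmul_eq_mul]
      push_cast
      ring
    constructor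
    · -- L2 identity
      rw [hm2, sum_equiv_E' (k := k) (fun j => ‖a j‖ ^ 2), ih2]
      have hinr : ∑ q : Fin (2 ^ k), ‖a (E k (Sum.inr q))‖ ^ 2 = ‖c‖ ^ 2 := by
        rw [Finset.sum_eq_single_of_mem (⟨0, by positivity⟩ : Fin (2 ^ k)) (Finset.mem_univ _)]
        intro q _ hq
        rw [supp_inr k a h q (fun h0 => hq (Fin.ext h0))]
        simp
      rw [hinr, hU]
      have hps : (2:ℝ) ^ k * (1 / 2 ^ k * ‖c‖ ^ 2) = ‖c‖ ^ 2 := by field_simp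
      linarith
    · -- L4 bound
      have hm4 : ∑ i, ‖Srow (k + 1) a i‖ ^ 4 ≤
          (1 / 2) * (∑ i, ‖s i‖ ^ 4) + 3 * ‖u‖ ^ 2 * (∑ i, ‖s i‖ ^ 2)
            + 2 ^ k / 2 * ‖u‖ ^ 4 := by
        rw [sum_equiv_E' k (fun i => ‖Srow (k + 1) a i‖ ^ 4)]
        simp only [hl, hr, half_four]
        rw [← Finset.sum_add_distrib]
        have hpt : ∀ i : Fin (2 ^ k), 1 / 4 * ‖s i + u‖ ^ 4 + 1 / 4 * ‖s i - u‖ ^ 4 ≤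
            (1 / 2) * ‖s i‖ ^ 4 + 3 * ‖u‖ ^ 2 * ‖s i‖ ^ 2 + 1 / 2 * ‖u‖ ^ 4 := by
          intro i
          have := four_ineq (s i) u
          nlinarith [this]
        calc ∑ i : Fin (2 ^ k), (1 / 4 * ‖s i + u‖ ^ 4 + 1 / 4 * ‖s i - u‖ ^ 4)
            ≤ ∑ i : Fin (2 ^ k), ((1 / 2) * ‖s i‖ ^ 4 + 3 * ‖u‖ ^ 2 * ‖s i‖ ^ 2
                + 1 / 2 * ‖u‖ ^ 4) := Finset.sum_le_sum (fun i _ => hpt i)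
          _ = (1 / 2) * (∑ i, ‖s i‖ ^ 4) + 3 * ‖u‖ ^ 2 * (∑ i, ‖s i‖ ^ 2)
                + 2 ^ k / 2 * ‖u‖ ^ 4 := by
              rw [Finset.sum_add_distrib, Finset.sum_add_distrib, ← Finset.mul_sum,
                ← Finset.mul_sum, Finset.sum_const, Finset.card_univ, Fintype.card_fin,
                nsmul_eq_mul]
              push_cast
              ring
      rw [hm2]
      have h2k : (0:ℝ) < 2 ^ k := by positivity
      have hU2 : (0:ℝ) ≤ ‖u‖ ^ 2 := by positivity
      have hm2nn : (0:ℝ) ≤ ∑ i, ‖s i‖ ^ 2 :=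
        Finset.sum_nonneg (fun i _ => by positivity)
      have key : (1 / 2) * (∑ i, ‖s i‖ ^ 4) ≤ 3 / 2 ^ (k + 1) * (∑ i, ‖s i‖ ^ 2) ^ 2 := by
        have heq : 3 / 2 ^ (k + 1) * (∑ i, ‖s i‖ ^ 2) ^ 2 =
            (1 / 2) * (3 / 2 ^ k * (∑ i, ‖s i‖ ^ 2) ^ 2) := by
          rw [pow_succ]; ring
        rw [heq]
        linarith
      have expand : 3 / 2 ^ (k + 1) * ((∑ i, ‖s i‖ ^ 2) + 2 ^ k * ‖u‖ ^ 2) ^ 2 =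
          3 / 2 ^ (k + 1) * (∑ i, ‖s i‖ ^ 2) ^ 2 + 3 * ‖u‖ ^ 2 * (∑ i, ‖s i‖ ^ 2)
            + 3 * 2 ^ k / 2 * (‖u‖ ^ 2) ^ 2 := by
        field_simp
        ring
      rw [expand]
      have : 2 ^ k / 2 * ‖u‖ ^ 4 ≤ 3 * 2 ^ k / 2 * (‖u‖ ^ 2) ^ 2 := by nlinarith [sq_nonneg (‖u‖^2)]
      nlinarith [hm4, key, this]


/-- Khintchine bound inside the Hadamard matrix: there is an absolute constant `B₁`
such that for every `k` and every vector `a ∈ ℂ^{2^k}` supported on the power-of-two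
indices (the Rademacher columns), `‖a‖₂ ≤ (B₁/√(2^k)) ‖H_{2^k} a‖₁`. -/
theorem stmt17 : ∃ B₁ > (0:ℝ), ∀ (k : ℕ) (a : Fin (2 ^ k) → ℂ),
    (∀ i : Fin (2 ^ k), (¬ ∃ l < k, (i : ℕ) = 2 ^ l) → a i = 0) →
    Real.sqrt (∑ i, ‖a i‖ ^ 2) ≤
      (B₁ / Real.sqrt (2 ^ k)) *
        ∑ i : Fin (2 ^ k), ‖∑ j : Fin (2 ^ k), ((hadamard k i j : ℝ) : ℂ) * a j‖ := by
  refine ⟨Real.sqrt 3, by positivity, ?_⟩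
  intro k a h
  obtain ⟨h2, h4⟩ := moments k a h
  have hgoal : (∑ i : Fin (2 ^ k), ‖∑ j : Fin (2 ^ k), ((hadamard k i j : ℝ) : ℂ) * a j‖) =
      ∑ i, ‖Srow k a i‖ := rfl
  rw [hgoal, ← h2]
  set s : Fin (2 ^ k) → ℝ := fun i => ‖Srow k a i‖ with hs
  have hsnn : ∀ i, 0 ≤ s i := fun i => norm_nonneg _
  set m1 : ℝ := ∑ i, s i with hm1
  set m2 : ℝ := ∑ i, s i ^ 2 with hm2
  set m4 : ℝ := ∑ i, s i ^ 4 with hm4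
  have hm1nn : 0 ≤ m1 := Finset.sum_nonneg (fun i _ => hsnn i)
  have hm2nn : 0 ≤ m2 := Finset.sum_nonneg (fun i _ => by positivity)
  have hm4nn : 0 ≤ m4 := Finset.sum_nonneg (fun i _ => by positivity)
  have h2k : (0:ℝ) < 2 ^ k := by positivity
  have CS1 : m2 ^ 2 ≤ m1 * ∑ i, s i ^ 3 := by
    have hcs := Finset.sum_mul_sq_le_sq_mul_sq Finset.univ
      (fun i => Real.sqrt (s i)) (fun i => Real.sqrt (s i) * s i)
    have e1 : ∑ i, Real.sqrt (s i) * (Real.sqrt (s i) * s i) = m2 := by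
      rw [hm2]
      refine Finset.sum_congr rfl (fun i _ => ?_)
      rw [← mul_assoc, Real.mul_self_sqrt (hsnn i)]; ring
    have e2 : ∑ i, Real.sqrt (s i) ^ 2 = m1 := by
      rw [hm1]
      exact Finset.sum_congr rfl (fun i _ => Real.sq_sqrt (hsnn i))
    have e3 : ∑ i, (Real.sqrt (s i) * s i) ^ 2 = ∑ i, s i ^ 3 := by
      refine Finset.sum_congr rfl (fun i _ => ?_)
      rw [mul_pow, Real.sq_sqrt (hsnn i)]; ring
    rw [e1, e2, e3] at hcs
    exact hcs
  have CS2 : (∑ i, s i ^ 3) ^ 2 ≤ m2 * m4 := by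
    have hcs := Finset.sum_mul_sq_le_sq_mul_sq Finset.univ
      (fun i => s i) (fun i => s i ^ 2)
    have e1 : ∑ i, s i * s i ^ 2 = ∑ i, s i ^ 3 := by
      refine Finset.sum_congr rfl (fun i _ => ?_); ring
    have e3 : ∑ i, (s i ^ 2) ^ 2 = m4 := by
      rw [hm4]; refine Finset.sum_congr rfl (fun i _ => ?_); ring
    rw [e1, e3] at hcs
    exact hcs
  have key : m2 ≤ 3 / 2 ^ k * m1 ^ 2 := by
    rcases eq_or_lt_of_le hm2nn with hz | hpos
    · rw [← hz]; positivity
    · have h3nn : 0 ≤ ∑ i, s i ^ 3 := Finset.sum_nonneg (fun i _ => by positivity)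
      have step : m2 ^ 4 ≤ m1 ^ 2 * (m2 * m4) := by
        calc m2 ^ 4 = (m2 ^ 2) ^ 2 := by ring
          _ ≤ (m1 * ∑ i, s i ^ 3) ^ 2 := by
              apply pow_le_pow_left₀ (by positivity) CS1
          _ = m1 ^ 2 * (∑ i, s i ^ 3) ^ 2 := by ring
          _ ≤ m1 ^ 2 * (m2 * m4) := by
              apply mul_le_mul_of_nonneg_left CS2 (by positivity)
      have step2 : m2 ^ 4 ≤ (3 / 2 ^ k * m1 ^ 2) * m2 ^ 3 := by
        calc m2 ^ 4 ≤ m1 ^ 2 * (m2 * m4) := step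
          _ ≤ m1 ^ 2 * (m2 * (3 / 2 ^ k * m2 ^ 2)) := by
              apply mul_le_mul_of_nonneg_left _ (by positivity)
              exact mul_le_mul_of_nonneg_left h4 hm2nn
          _ = (3 / 2 ^ k * m1 ^ 2) * m2 ^ 3 := by ring
      have hc : m2 * m2 ^ 3 ≤ (3 / 2 ^ k * m1 ^ 2) * m2 ^ 3 := by
        calc m2 * m2 ^ 3 = m2 ^ 4 := by ring
          _ ≤ _ := step2
      exact le_of_mul_le_mul_right hc (by positivity)
  calc Real.sqrt m2 ≤ Real.sqrt (3 / 2 ^ k * m1 ^ 2) := Real.sqrt_le_sqrt key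
    _ = Real.sqrt 3 / Real.sqrt (2 ^ k) * m1 := by
        rw [Real.sqrt_mul (by positivity), Real.sqrt_sq hm1nn,
          Real.sqrt_div' 3 (by norm_num)]
end
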